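/- Let θ, γ, ρ > 0 and ξ ∈ ℝ be constants, and let P₀ > 0 and G₀ > 0 denote the initial training resource and heterogeneity. Define the convergence-bound function h(P, G) = θ/P + γ·G²/P + ρ·G² + ξ for P > 0, G ≥ 0. If the population is partitioned into K ≥ 1 cohorts so that each cohort has training resource P = P₀/K and heterogeneity G satisfying G² = G₀²/K (i.e., intra-cohort heterogeneity reduced by √K times), and if P ≥ √((θ·P₀)/(ρ·G₀²)), then h(P, G) ≤ h(P₀, G₀). -/

import Mathlib

/-- Cohort partitioning with resource `P = P₀/K` and heterogeneity
`G² = G₀²/K` does not degrade the convergence bound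
`h(P, G) = θ/P + γ·G²/P + ρ·G² + ξ` provided `P ≥ √((θ·P₀)/(ρ·G₀²))`. -/
theorem cohort_partition_no_degradation
    (θ γ ρ ξ P₀ G₀ : ℝ) (hθ : 0 < θ) (hγ : 0 < γ) (hρ : 0 < ρ)
    (hP₀ : 0 < P₀) (hG₀ : 0 < G₀)
    (K : ℝ) (hK : 1 ≤ K)
    (P G : ℝ) (hP : P = P₀ / K) (hG : 0 ≤ G) (hG2 : G ^ 2 = G₀ ^ 2 / K)
    (hPge : Real.sqrt ((θ * P₀) / (ρ * G₀ ^ 2)) ≤ P) :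
    θ / P + γ * G ^ 2 / P + ρ * G ^ 2 + ξ
      ≤ θ / P₀ + γ * G₀ ^ 2 / P₀ + ρ * G₀ ^ 2 + ξ := by
  have hK0 : 0 < K := lt_of_lt_of_le one_pos hK
  have hq : (0:ℝ) ≤ θ * P₀ / (ρ * G₀ ^ 2) := by positivity
  have hs : θ * P₀ / (ρ * G₀ ^ 2) ≤ P ^ 2 := by
    have h1 := Real.sq_sqrt hq
    nlinarith [Real.sqrt_nonneg (θ * P₀ / (ρ * G₀ ^ 2))]
  have hkey : θ * P₀ ≤ ρ * G₀ ^ 2 * P ^ 2 := by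
    rw [div_le_iff₀ (by positivity)] at hs; linarith [hs]
  subst hP
  rw [hG2]
  have hk2 : ρ * G₀ ^ 2 * (P₀ / K) ^ 2 * K ^ 2 = ρ * G₀ ^ 2 * P₀ ^ 2 := by
    field_simp
  have h2 : θ * K ^ 2 ≤ ρ * G₀ ^ 2 * P₀ := by
    have h4 := mul_le_mul_of_nonneg_right hkey (sq_nonneg K)
    rw [hk2] at h4
    nlinarith [h4, hP₀]
  have e1 : θ / (P₀ / K) = θ * K / P₀ := by field_simp
  have e2 : γ * (G₀ ^ 2 / K) / (P₀ / K) = γ * G₀ ^ 2 / P₀ := by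
    field_simp
  rw [e1, e2]
  have main : θ * K ^ 2 + ρ * G₀ ^ 2 * P₀ ≤ θ * K + ρ * G₀ ^ 2 * P₀ * K := by
    have hθK : θ * K ≤ ρ * G₀ ^ 2 * P₀ := by nlinarith [h2, mul_nonneg (mul_nonneg hθ.le hK0.le) (sub_nonneg.2 hK)]
    nlinarith [mul_nonneg (sub_nonneg.2 hK) (sub_nonneg.2 hθK)]
  have h3 : θ * K / P₀ + ρ * (G₀ ^ 2 / K) ≤ θ / P₀ + ρ * G₀ ^ 2 := by
    rw [← sub_nonneg]
    have heq : θ / P₀ + ρ * G₀ ^ 2 - (θ * K / P₀ + ρ * (G₀ ^ 2 / K))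
        = (θ * K + ρ * G₀ ^ 2 * P₀ * K - (θ * K ^ 2 + ρ * G₀ ^ 2 * P₀)) / (P₀ * K) := by
      field_simp
    rw [heq]
    exact div_nonneg (by linarith) (by positivity)
  linarith
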